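/- There exists a first-order formula σ(x, y) with two free variables over the language with a single binary relation symbol such that for every dimension n ≥ 1 and all partial instances e, e' of dimension n, the structure A_n ⊨ σ(e, e') if and only if e_⊥ = e'_⊥, i.e., the sets of undefined features of e and e' coincide. -/
import Mathlib


open FirstOrder FirstOrder.Language

abbrev PI (n : ℕ) : Type := Fin n → Option Bool

def Subs {n : ℕ} (e e' : PI n) : Prop := ∀ i, e i ≠ none → e' i = e i

/-- The language with a single binary relation symbol. -/
def subLang : Language where
  Functions _ := Empty
  Relations n := match n with
    | 2 => Unit
    | _ => Empty

/-- The structure `A_n`: partial instances of dimension `n` with subsumption `⊑`. -/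
instance subStruct (n : ℕ) : subLang.Structure (PI n) where
  funMap := fun {_} f => f.elim
  RelMap := fun {k} r v => match k, r with
    | 2, _ => Subs (v 0) (v 1)

namespace Stmt10Aux

abbrev BF (k : ℕ) := subLang.BoundedFormula (Fin 2) k

def sub' {k : ℕ} (t u : subLang.Term (Fin 2 ⊕ Fin k)) : BF k :=
  Relations.boundedFormula₂ () t u

@[simp] lemma realize_sub' {n k : ℕ} (t u : subLang.Term (Fin 2 ⊕ Fin k))
    (v : Fin 2 → PI n) (xs : Fin k → PI n) :
    (sub' t u).Realize v xs ↔
      Subs (t.realize (Sum.elim v xs)) (u.realize (Sum.elim v xs)) := by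
  simp only [sub', BoundedFormula.realize_rel₂]
  rfl

def atomPI {n : ℕ} (i : Fin n) (b : Bool) : PI n := fun j => if j = i then some b else none

def IsAtomPI {n : ℕ} (a : PI n) : Prop := ∃ i b, a = atomPI i b

lemma subs_atom {n : ℕ} (i : Fin n) (b : Bool) (e : PI n) :
    Subs (atomPI i b) e ↔ e i = some b := by
  constructor
  · intro h
    have := h i (by simp [atomPI])
    simpa [atomPI] using this
  · intro h j hj
    have : j = i := by
      by_contra hne
      simp [atomPI, hne] at hj
    subst this
    simpa [atomPI] using h

lemma atomPI_inj {n : ℕ} {i i' : Fin n} {b b' : Bool} (h : atomPI i b = atomPI i' b') :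
    i = i' ∧ b = b' := by
  have := congrFun h i
  simp only [atomPI, if_pos rfl] at this
  by_cases hii : i = i'
  · subst hii
    simp at this
    exact ⟨rfl, this⟩
  · simp [hii] at this

def botF {k : ℕ} (i : Fin k) : BF k :=
  ∀' sub' (Term.var (Sum.inr i.castSucc)) (Term.var (Sum.inr (Fin.last k)))

lemma subs_all {n : ℕ} (e : PI n) : (∀ w : PI n, Subs e w) ↔ ∀ j, e j = none := by
  constructor
  · intro h j
    by_contra hj
    exact hj (h (fun _ => none) j hj).symm
  · intro h w j hj
    exact absurd (h j) hj

@[simp] lemma realize_botF {n k : ℕ} (i : Fin k) (v : Fin 2 → PI n) (xs : Fin k → PI n) :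
    (botF i).Realize v xs ↔ ∀ j, xs i j = none := by
  simp only [botF, BoundedFormula.realize_all, realize_sub', Term.realize_var, Sum.elim_inr,
    Fin.snoc_castSucc, Fin.snoc_last]
  exact subs_all _

def eqF {k : ℕ} (i j : Fin k) : BF k :=
  sub' (Term.var (Sum.inr i)) (Term.var (Sum.inr j)) ⊓
    sub' (Term.var (Sum.inr j)) (Term.var (Sum.inr i))

lemma subs_antisymm {n : ℕ} {e e' : PI n} (h : Subs e e') (h' : Subs e' e) : e = e' := by
  funext i
  by_cases hi : e i = none
  · by_cases hi' : e' i = none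
    · rw [hi, hi']
    · exact h' i hi'
  · exact (h i hi).symm

@[simp] lemma realize_eqF {n k : ℕ} (i j : Fin k) (v : Fin 2 → PI n) (xs : Fin k → PI n) :
    (eqF i j).Realize v xs ↔ xs i = xs j := by
  simp only [eqF, BoundedFormula.realize_inf, realize_sub', Term.realize_var, Sum.elim_inr]
  constructor
  · rintro ⟨h1, h2⟩; exact subs_antisymm h1 h2
  · intro hxy; rw [hxy]; exact ⟨fun _ _ => rfl, fun _ _ => rfl⟩

def atomF {k : ℕ} (i : Fin k) : BF k :=
  ∼(botF i) ⊓
    ∀' (sub' (Term.var (Sum.inr (Fin.last k))) (Term.var (Sum.inr i.castSucc)) ⟹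
        (botF (Fin.last k) ⊔ eqF (Fin.last k) i.castSucc))

lemma atom_iff {n : ℕ} (a : PI n) :
    ((¬ ∀ j, a j = none) ∧ ∀ z : PI n, Subs z a → (∀ j, z j = none) ∨ z = a) ↔ IsAtomPI a := by
  constructor
  · rintro ⟨h1, h2⟩
    push_neg at h1
    obtain ⟨i, hi⟩ := h1
    obtain ⟨b, hb⟩ := Option.ne_none_iff_exists'.mp hi
    refine ⟨i, b, ?_⟩
    have hsub : Subs (atomPI i b) a := (subs_atom i b a).mpr hb
    rcases h2 _ hsub with h | h
    · exact absurd (h i) (by simp [atomPI])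
    · exact h.symm
  · rintro ⟨i, b, rfl⟩
    constructor
    · intro h
      have := h i
      simp [atomPI] at this
    · intro z hz
      by_cases hzb : ∀ j, z j = none
      · exact Or.inl hzb
      · push_neg at hzb
        obtain ⟨j, hj⟩ := hzb
        have hji : j = i := by
          by_contra hne
          have := hz j hj
          simp [atomPI, hne] at this
          exact hj this.symm
        subst hji
        have hzj : z j = some b := by
          have := hz j hj
          simpa [atomPI] using this.symm
        right
        funext m
        by_cases hm : m = j
        · subst hm; simpa [atomPI] using hzj
        · by_contra hmn
          have hmz : z m ≠ none := fun h => hmn (by simp [atomPI, hm, h])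
          have := hz m hmz
          simp [atomPI, hm] at this
          exact hmz this.symm

@[simp] lemma realize_atomF {n k : ℕ} (i : Fin k) (v : Fin 2 → PI n) (xs : Fin k → PI n) :
    (atomF i).Realize v xs ↔ IsAtomPI (xs i) := by
  rw [← atom_iff]
  simp only [atomF, BoundedFormula.realize_inf, BoundedFormula.realize_not, realize_botF,
    BoundedFormula.realize_all, BoundedFormula.realize_imp, realize_sub', Term.realize_var,
    Sum.elim_inr, Fin.snoc_castSucc, Fin.snoc_last, BoundedFormula.realize_sup, realize_eqF]

def compatF {k : ℕ} (i j : Fin k) : BF k :=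
  ∃' (sub' (Term.var (Sum.inr i.castSucc)) (Term.var (Sum.inr (Fin.last k))) ⊓
      sub' (Term.var (Sum.inr j.castSucc)) (Term.var (Sum.inr (Fin.last k))))

def scF {k : ℕ} (i j : Fin k) : BF k := eqF i j ⊔ ∼(compatF i j)

@[simp] lemma realize_scF {n k : ℕ} (i j : Fin k) (v : Fin 2 → PI n) (xs : Fin k → PI n) :
    (scF i j).Realize v xs ↔ (xs i = xs j ∨ ¬ ∃ z, Subs (xs i) z ∧ Subs (xs j) z) := by
  simp only [scF, BoundedFormula.realize_sup, realize_eqF, BoundedFormula.realize_not, compatF,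
    BoundedFormula.realize_ex, BoundedFormula.realize_inf, realize_sub', Term.realize_var,
    Sum.elim_inr, Fin.snoc_castSucc, Fin.snoc_last]

lemma sc_atoms {n : ℕ} (i i' : Fin n) (b b' : Bool) :
    (atomPI i b = atomPI i' b' ∨ ¬ ∃ z, Subs (atomPI i b) z ∧ Subs (atomPI i' b') z) ↔
      i = i' := by
  constructor
  · rintro (h | h)
    · exact (atomPI_inj h).1
    · by_contra hne
      apply h
      refine ⟨fun m => if m = i then some b else if m = i' then some b' else none, ?_, ?_⟩
      · rw [subs_atom]; simp
      · rw [subs_atom]; simp [Ne.symm hne]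
  · rintro rfl
    by_cases hb : b = b'
    · subst hb; exact Or.inl rfl
    · refine Or.inr ?_
      rintro ⟨z, hz1, hz2⟩
      rw [subs_atom] at hz1 hz2
      rw [hz1] at hz2
      simp at hz2
      exact hb hz2

def dirF (u w : Fin 2) : subLang.Formula (Fin 2) :=
  ∀' ((atomF (Fin.last 0) ⊓ sub' (Term.var (Sum.inr (Fin.last 0))) (Term.var (Sum.inl u))) ⟹
      ∃' (atomF (Fin.last 1) ⊓ sub' (Term.var (Sum.inr (Fin.last 1))) (Term.var (Sum.inl w)) ⊓
          scF ((Fin.last 0).castSucc) (Fin.last 1)))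

lemma realize_dirF {n : ℕ} (u w : Fin 2) (v : Fin 2 → PI n) :
    (dirF u w).Realize v ↔ ∀ i, v u i ≠ none → v w i ≠ none := by
  have : (dirF u w).Realize v ↔
      ∀ a : PI n, IsAtomPI a ∧ Subs a (v u) →
        ∃ c : PI n, (IsAtomPI c ∧ Subs c (v w)) ∧
          (a = c ∨ ¬ ∃ z, Subs a z ∧ Subs c z) := by
    simp only [dirF, Formula.Realize, BoundedFormula.realize_all, BoundedFormula.realize_imp,
      BoundedFormula.realize_inf, realize_atomF, realize_sub', Term.realize_var, Sum.elim_inr,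
      Sum.elim_inl, Fin.snoc_castSucc, Fin.snoc_last, BoundedFormula.realize_ex, realize_scF,
      and_assoc]
  rw [this]
  constructor
  · intro h i hi
    obtain ⟨b, hb⟩ := Option.ne_none_iff_exists'.mp hi
    obtain ⟨c, ⟨⟨i', b', rfl⟩, hc2⟩, hsc⟩ :=
      h (atomPI i b) ⟨⟨i, b, rfl⟩, (subs_atom i b (v u)).mpr hb⟩
    have hii : i = i' := (sc_atoms i i' b b').mp hsc
    subst hii
    rw [subs_atom] at hc2
    rw [hc2]
    simp
  · rintro h a ⟨⟨i, b, rfl⟩, hsub⟩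
    rw [subs_atom] at hsub
    have hw : v w i ≠ none := h i (by rw [hsub]; simp)
    obtain ⟨b', hb'⟩ := Option.ne_none_iff_exists'.mp hw
    refine ⟨atomPI i b', ⟨⟨i, b', rfl⟩, (subs_atom i b' (v w)).mpr hb'⟩, ?_⟩
    exact (sc_atoms i i b b').mpr rfl

end Stmt10Aux

open Stmt10Aux in
theorem stmt10 :
    ∃ σ : subLang.Formula (Fin 2),
      ∀ (n : ℕ), 1 ≤ n → ∀ (e e' : PI n),
        (σ.Realize ![e, e'] ↔ {i | e i = none} = {i | e' i = none}) := by
  refine ⟨dirF 0 1 ⊓ dirF 1 0, fun n hn e e' => ?_⟩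
  rw [Formula.realize_inf, realize_dirF, realize_dirF]
  simp only [Matrix.cons_val_zero, Matrix.cons_val_one, Matrix.head_cons]
  constructor
  · rintro ⟨h1, h2⟩
    ext i
    simp only [Set.mem_setOf_eq]
    constructor
    · intro hi
      by_contra hi'
      exact (h2 i hi') hi
    · intro hi
      by_contra hi'
      exact (h1 i hi') hi
  · intro h
    have h' := fun i => Set.ext_iff.mp h i
    simp only [Set.mem_setOf_eq] at h'
    constructor
    · intro i hi hi'
      exact hi ((h' i).mpr hi')
    · intro i hi hi'
      exact hi ((h' i).mp hi')
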